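/- arXiv:2503.14680 — 2 statements merged into one kernel-verified Lean document; each statement's English description precedes it below -/
import Mathlib

section
/- For relatively prime odd positive integers m and n and any integer k, the Gauss-type sum satisfies the multiplicativity G_k(mn) = G_k(m)·G_k(n), where G_k(n) = ((1−i)/2 + (−1/n)·(1+i)/2)·∑_{a mod n} (a/n)·e(ak/n). -/
open Real Complex Finset


lemma sum_range_zmod (n : ℕ) [NeZero n] (f : ℕ → ℂ) :
    ∑ a ∈ Finset.range n, f a = ∑ z : ZMod n, f z.val := by
  refine Finset.sum_nbij' (fun a => (a : ZMod n)) (fun z => z.val) ?_ ?_ ?_ ?_ ?_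
  · intro a _; exact Finset.mem_univ _
  · intro z _; exact Finset.mem_range.mpr (ZMod.val_lt z)
  · intro a ha; exact ZMod.val_cast_of_lt (Finset.mem_range.mp ha)
  · intro z _; exact ZMod.natCast_rightInverse z
  · intro a ha; rw [ZMod.val_cast_of_lt (Finset.mem_range.mp ha)]

lemma exp_mod (N : ℕ) [NeZero N] (a : ℕ) (k : ℤ) :
    Complex.exp (2 * (π : ℂ) * Complex.I * ((a % N : ℕ) : ℂ) * (k : ℂ) / (N : ℂ)) =
    Complex.exp (2 * (π : ℂ) * Complex.I * (a : ℂ) * (k : ℂ) / (N : ℂ)) := by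
  have hN : (N : ℂ) ≠ 0 := Nat.cast_ne_zero.mpr (NeZero.ne N)
  obtain ⟨q, r, hq⟩ : ∃ q r : ℕ, N * q + r = a ∧ a % N = r :=
    ⟨a / N, a % N, Nat.div_add_mod a N, rfl⟩
  obtain ⟨hq1, hq2⟩ := hq
  rw [hq2, ← hq1]
  rw [show 2 * (π : ℂ) * Complex.I * ((N * q + r : ℕ) : ℂ) * (k : ℂ) / (N : ℂ)
      = (((q : ℤ) * k : ℤ) : ℂ) * (2 * (π : ℂ) * Complex.I)
        + 2 * (π : ℂ) * Complex.I * (r : ℂ) * (k : ℂ) / (N : ℂ) by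
    push_cast; field_simp]
  rw [Complex.exp_add, Complex.exp_int_mul_two_pi_mul_I, one_mul]

lemma crt_bij (m n : ℕ) [NeZero m] [NeZero n] (hcop : Nat.Coprime m n) :
    Function.Bijective (fun p : ZMod m × ZMod n =>
      ((p.1.val * n + p.2.val * m : ℕ) : ZMod (m * n))) := by
  haveI : NeZero (m * n) := ⟨Nat.mul_ne_zero (NeZero.ne m) (NeZero.ne n)⟩
  rw [Fintype.bijective_iff_injective_and_card]
  refine ⟨?_, by simp [ZMod.card]⟩
  intro p q h
  have hum : IsUnit ((n : ZMod m)) := (ZMod.isUnit_iff_coprime n m).mpr hcop.symm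
  have hun : IsUnit ((m : ZMod n)) := (ZMod.isUnit_iff_coprime m n).mpr hcop
  have h1 : p.1 * (n : ZMod m) = q.1 * (n : ZMod m) := by
    have h' := congrArg (ZMod.castHom (dvd_mul_right m n) (ZMod m)) h
    rw [map_natCast, map_natCast] at h'
    simp only [Nat.cast_add, Nat.cast_mul, ZMod.natCast_self, mul_zero,
      add_zero, ZMod.natCast_val, ZMod.cast_id] at h'
    exact h'
  have h2 : p.2 * (m : ZMod n) = q.2 * (m : ZMod n) := by
    have h' := congrArg (ZMod.castHom (dvd_mul_left n m) (ZMod n)) h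
    rw [map_natCast, map_natCast] at h'
    simp only [Nat.cast_add, Nat.cast_mul, ZMod.natCast_self, mul_zero,
      zero_add, ZMod.natCast_val, ZMod.cast_id] at h'
    exact h'
  exact Prod.ext (hum.mul_right_cancel h1) (hun.mul_right_cancel h2)

lemma pointwise (m n : ℕ) [NeZero m] [NeZero n] (hcop : Nat.Coprime m n) (k : ℤ)
    (x : ZMod m) (y : ZMod n) :
    (jacobiSym ((((x.val * n + y.val * m : ℕ) : ZMod (m * n)).val : ℕ) : ℤ) (m * n) : ℂ) *
      Complex.exp (2 * (π : ℂ) * Complex.I *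
        ((((x.val * n + y.val * m : ℕ) : ZMod (m * n)).val : ℕ) : ℂ) * (k : ℂ) /
          ((m * n : ℕ) : ℂ))
    = ((jacobiSym (n : ℤ) m : ℂ) * (jacobiSym (m : ℤ) n : ℂ)) *
        (((jacobiSym ((x.val : ℕ) : ℤ) m : ℂ) *
            Complex.exp (2 * (π : ℂ) * Complex.I * ((x.val : ℕ) : ℂ) * (k : ℂ) / (m : ℂ))) *
         ((jacobiSym ((y.val : ℕ) : ℤ) n : ℂ) *
            Complex.exp (2 * (π : ℂ) * Complex.I * ((y.val : ℕ) : ℂ) * (k : ℂ) / (n : ℂ)))) := by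
  haveI : NeZero (m * n) := ⟨Nat.mul_ne_zero (NeZero.ne m) (NeZero.ne n)⟩
  have hm0 : (m : ℂ) ≠ 0 := Nat.cast_ne_zero.mpr (NeZero.ne m)
  have hn0 : (n : ℂ) ≠ 0 := Nat.cast_ne_zero.mpr (NeZero.ne n)
  set a : ℕ := x.val * n + y.val * m with ha
  rw [ZMod.val_natCast]
  -- jacobi part
  have hJ : jacobiSym ((a % (m * n) : ℕ) : ℤ) (m * n)
      = jacobiSym (n : ℤ) m * jacobiSym (m : ℤ) n *
        (jacobiSym ((x.val : ℕ) : ℤ) m * jacobiSym ((y.val : ℕ) : ℤ) n) := by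
    have hmod : ((a % (m * n) : ℕ) : ℤ) % ((m * n : ℕ) : ℤ) = (a : ℤ) % ((m * n : ℕ) : ℤ) := by
      push_cast
      simp [Int.emod_emod_of_dvd]
    rw [jacobiSym.mod_left' hmod, jacobiSym.mul_right]
    have e1 : jacobiSym (a : ℤ) m = jacobiSym ((x.val : ℕ) : ℤ) m * jacobiSym (n : ℤ) m := by
      have : ((a : ℕ) : ℤ) % (m : ℕ) = (((x.val : ℕ) : ℤ) * (n : ℕ)) % (m : ℕ) := by
        rw [ha]; push_cast; exact Int.add_mul_emod_self_right _ _ _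
      rw [jacobiSym.mod_left' this, jacobiSym.mul_left]
    have e2 : jacobiSym (a : ℤ) n = jacobiSym ((y.val : ℕ) : ℤ) n * jacobiSym (m : ℤ) n := by
      have : ((a : ℕ) : ℤ) % (n : ℕ) = (((y.val : ℕ) : ℤ) * (m : ℕ)) % (n : ℕ) := by
        rw [ha]; push_cast; rw [add_comm]; exact Int.add_mul_emod_self_right _ _ _
      rw [jacobiSym.mod_left' this, jacobiSym.mul_left]
    rw [e1, e2]; ring
  -- exp part
  rw [exp_mod (m * n) a k]
  have hexp : 2 * (π : ℂ) * Complex.I * (a : ℂ) * (k : ℂ) / ((m * n : ℕ) : ℂ)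
      = 2 * (π : ℂ) * Complex.I * ((x.val : ℕ) : ℂ) * (k : ℂ) / (m : ℂ)
        + 2 * (π : ℂ) * Complex.I * ((y.val : ℕ) : ℂ) * (k : ℂ) / (n : ℂ) := by
    rw [ha]; push_cast; field_simp
  rw [hexp, Complex.exp_add, hJ]
  push_cast
  ring

lemma key (m n : ℕ) [NeZero m] [NeZero n] (hcop : Nat.Coprime m n) (k : ℤ) :
    ∑ a ∈ Finset.range (m * n), (jacobiSym (a : ℤ) (m * n) : ℂ) *
        Complex.exp (2 * (π : ℂ) * Complex.I * (a : ℂ) * (k : ℂ) / ((m * n : ℕ) : ℂ))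
    = (jacobiSym (n : ℤ) m : ℂ) * (jacobiSym (m : ℤ) n : ℂ) *
      ((∑ a ∈ Finset.range m, (jacobiSym (a : ℤ) m : ℂ) *
          Complex.exp (2 * (π : ℂ) * Complex.I * (a : ℂ) * (k : ℂ) / (m : ℂ))) *
       (∑ a ∈ Finset.range n, (jacobiSym (a : ℤ) n : ℂ) *
          Complex.exp (2 * (π : ℂ) * Complex.I * (a : ℂ) * (k : ℂ) / (n : ℂ)))) := by
  haveI : NeZero (m * n) := ⟨Nat.mul_ne_zero (NeZero.ne m) (NeZero.ne n)⟩
  rw [sum_range_zmod (m * n), sum_range_zmod m, sum_range_zmod n]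
  rw [← Fintype.sum_bijective _ (crt_bij m n hcop)
      (fun p : ZMod m × ZMod n =>
        (jacobiSym ((((p.1.val * n + p.2.val * m : ℕ) : ZMod (m * n)).val : ℕ) : ℤ) (m * n) : ℂ) *
          Complex.exp (2 * (π : ℂ) * Complex.I *
            ((((p.1.val * n + p.2.val * m : ℕ) : ZMod (m * n)).val : ℕ) : ℂ) * (k : ℂ) /
              ((m * n : ℕ) : ℂ)))
      _ (fun p => rfl)]
  rw [Finset.sum_congr rfl (fun p _ => pointwise m n hcop k p.1 p.2)]
  rw [← Finset.mul_sum, Fintype.sum_prod_type]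
  dsimp only
  rw [← Finset.sum_mul_sum]

lemma eps_mul (m n : ℕ) (hmo : Odd m) (hno : Odd n) (hcop : Nat.Coprime m n) :
    ((1 - Complex.I) / 2 + (jacobiSym (-1) (m * n) : ℂ) * (1 + Complex.I) / 2) *
      ((jacobiSym (n : ℤ) m : ℂ) * (jacobiSym (m : ℤ) n : ℂ))
    = ((1 - Complex.I) / 2 + (jacobiSym (-1) m : ℂ) * (1 + Complex.I) / 2) *
      ((1 - Complex.I) / 2 + (jacobiSym (-1) n : ℂ) * (1 + Complex.I) / 2) := by
  have hmn : Odd (m * n) := hmo.mul hno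
  have hJ : jacobiSym (n : ℤ) m = 1 ∨ jacobiSym (n : ℤ) m = -1 := by
    apply jacobiSym.eq_one_or_neg_one
    rw [Int.gcd_natCast_natCast]; exact hcop.symm
  rw [jacobiSym.at_neg_one hmo, jacobiSym.at_neg_one hno, jacobiSym.at_neg_one hmn]
  have hχmul : ZMod.χ₄ ((m * n : ℕ) : ZMod 4) = ZMod.χ₄ (m : ZMod 4) * ZMod.χ₄ (n : ZMod 4) := by
    rw [Nat.cast_mul, map_mul]
  rcases Nat.odd_mod_four_iff.mp (Nat.odd_iff.mp hmo) with h1 | h3 <;>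
    rcases Nat.odd_mod_four_iff.mp (Nat.odd_iff.mp hno) with g1 | g3
  · rw [jacobiSym.quadratic_reciprocity_one_mod_four h1 hno, hχmul,
      ZMod.χ₄_nat_one_mod_four h1, ZMod.χ₄_nat_one_mod_four g1]
    rcases hJ with h | h <;> rw [h] <;> push_cast <;> ring
  · rw [jacobiSym.quadratic_reciprocity_one_mod_four h1 hno, hχmul,
      ZMod.χ₄_nat_one_mod_four h1, ZMod.χ₄_nat_three_mod_four g3]
    rcases hJ with h | h <;> rw [h] <;> push_cast <;> ring
  · rw [jacobiSym.quadratic_reciprocity_one_mod_four' hmo g1, hχmul,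
      ZMod.χ₄_nat_three_mod_four h3, ZMod.χ₄_nat_one_mod_four g1]
    rcases hJ with h | h <;> rw [h] <;> push_cast <;> ring
  · rw [jacobiSym.quadratic_reciprocity_three_mod_four h3 g3, hχmul,
      ZMod.χ₄_nat_three_mod_four h3, ZMod.χ₄_nat_three_mod_four g3]
    rcases hJ with h | h <;> rw [h] <;> push_cast <;>
      linear_combination -Complex.I_mul_I

/-- The Gauss-type sum `G_k(n)` for odd `n`:
`G_k(n) = ((1−i)/2 + (−1/n)(1+i)/2) ∑_{a mod n} (a/n) e(ak/n)`. -/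
noncomputable def Gk (k : ℤ) (n : ℕ) : ℂ :=
  ((1 - Complex.I) / 2 + (jacobiSym (-1) n : ℂ) * (1 + Complex.I) / 2) *
    ∑ a ∈ Finset.range n, (jacobiSym (a : ℤ) n : ℂ) *
      Complex.exp (2 * (π : ℂ) * Complex.I * (a : ℂ) * (k : ℂ) / (n : ℂ))

/-- for relatively prime odd positive integers `m`, `n` and any integer `k`,
`G_k(mn) = G_k(m) G_k(n)`. -/
theorem stmt7 (m n : ℕ) (hm : 0 < m) (hn : 0 < n) (hmo : Odd m) (hno : Odd n)
    (hcop : Nat.Coprime m n) (k : ℤ) :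
    Gk k (m * n) = Gk k m * Gk k n := by
  haveI : NeZero m := ⟨hm.ne'⟩
  haveI : NeZero n := ⟨hn.ne'⟩
  unfold Gk
  rw [key m n hcop k]
  set Sm : ℂ := ∑ a ∈ Finset.range m, (jacobiSym (a : ℤ) m : ℂ) *
      Complex.exp (2 * (π : ℂ) * Complex.I * (a : ℂ) * (k : ℂ) / (m : ℂ)) with hSm
  set Sn : ℂ := ∑ a ∈ Finset.range n, (jacobiSym (a : ℤ) n : ℂ) *
      Complex.exp (2 * (π : ℂ) * Complex.I * (a : ℂ) * (k : ℂ) / (n : ℂ)) with hSn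
  linear_combination (Sm * Sn) * eps_mul m n hmo hno hcop
end

section
/- For any odd positive integer n and any integer k, G_{4k}(n) = G_k(n), where G_k(n) = ((1−i)/2 + (−1/n)·(1+i)/2)·∑_{a mod n} (a/n)·e(ak/n). -/
open Real Complex Finset

private lemma jac_cong (n : ℕ) {a b : ℤ} (h : (a : ZMod n) = (b : ZMod n)) :
    jacobiSym a n = jacobiSym b n :=
  jacobiSym.mod_left' ((ZMod.intCast_eq_intCast_iff' a b n).mp h)

private lemma exp_cong (n : ℕ) (hn : 0 < n) {a b : ℤ} (h : (a : ZMod n) = (b : ZMod n)) :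
    Complex.exp (2 * (π : ℂ) * Complex.I * (a : ℂ) / n)
      = Complex.exp (2 * (π : ℂ) * Complex.I * (b : ℂ) / n) := by
  have hdvd : (n : ℤ) ∣ b - a := ((ZMod.intCast_eq_intCast_iff _ _ _).mp h).dvd
  obtain ⟨t, ht⟩ := hdvd
  have hb : (b : ℂ) = (a : ℂ) + (n : ℂ) * (t : ℂ) := by
    have hb' : b = a + n * t := by linarith [ht]
    rw [hb']; push_cast; ring
  have hn' : (n : ℂ) ≠ 0 := Nat.cast_ne_zero.mpr hn.ne'
  rw [hb, show 2 * (π : ℂ) * Complex.I * ((a : ℂ) + (n : ℂ) * (t : ℂ)) / n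
      = 2 * (π : ℂ) * Complex.I * (a : ℂ) / n + (t : ℂ) * (2 * π * Complex.I) from by
        field_simp,
    Complex.exp_add, Complex.exp_int_mul_two_pi_mul_I, mul_one]

/-- for any odd positive integer `n` and any integer `k`,
`G_{4k}(n) = G_k(n)`. -/
theorem stmt8 (n : ℕ) (hn : 0 < n) (hno : Odd n) (k : ℤ) :
    Gk (4 * k) n = Gk k n := by
  haveI : NeZero n := ⟨hn.ne'⟩
  have hc2 : Nat.Coprime 2 n := Nat.coprime_two_left.mpr hno
  have hc4 : Nat.Coprime 4 n := by
    have := Nat.Coprime.mul hc2 hc2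
    simpa using this
  have hJ4 : jacobiSym 4 n = 1 := by
    have hcop2 : Int.gcd 2 n = 1 := by simpa [Int.gcd] using hc2
    rw [show (4 : ℤ) = 2 ^ 2 by norm_num, jacobiSym.sq_one' hcop2]
  have key : ∀ c : ℤ,
      (∑ a ∈ Finset.range n, (jacobiSym (a : ℤ) n : ℂ) *
        Complex.exp (2 * (π : ℂ) * Complex.I * ((a * c : ℤ) : ℂ) / (n : ℂ)))
      = ∑ x : ZMod n, (jacobiSym (x.val : ℤ) n : ℂ) *
        Complex.exp (2 * (π : ℂ) * Complex.I * ((x.val * c : ℤ) : ℂ) / (n : ℂ)) := by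
    intro c
    refine Finset.sum_nbij' (fun a => (a : ZMod n)) (fun x => x.val) ?_ ?_ ?_ ?_ ?_
    · intro a _; exact Finset.mem_univ _
    · intro x _; exact Finset.mem_range.mpr (ZMod.val_lt x)
    · intro a ha; exact ZMod.val_cast_of_lt (Finset.mem_range.mp ha)
    · intro x _
      simp [ZMod.natCast_val, ZMod.cast_id]
    · intro a ha
      rw [ZMod.val_cast_of_lt (Finset.mem_range.mp ha)]
  have e1 : ∀ (c : ℤ) (a : ℕ),
      (2 * (π : ℂ) * Complex.I * (a : ℂ) * (c : ℂ) / (n : ℂ))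
      = 2 * (π : ℂ) * Complex.I * ((a * c : ℤ) : ℂ) / (n : ℂ) := by
    intro c a; push_cast; ring
  unfold Gk
  congr 1
  calc ∑ a ∈ Finset.range n, (jacobiSym (a : ℤ) n : ℂ) *
        Complex.exp (2 * (π : ℂ) * Complex.I * (a : ℂ) * ((4 * k : ℤ) : ℂ) / (n : ℂ))
      = ∑ x : ZMod n, (jacobiSym (x.val : ℤ) n : ℂ) *
        Complex.exp (2 * (π : ℂ) * Complex.I * ((x.val * (4 * k) : ℤ) : ℂ) / (n : ℂ)) := by
        rw [← key (4 * k)]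
        exact Finset.sum_congr rfl fun a _ => by rw [e1 (4 * k) a]
    _ = ∑ x : ZMod n, (jacobiSym (x.val : ℤ) n : ℂ) *
        Complex.exp (2 * (π : ℂ) * Complex.I * ((x.val * k : ℤ) : ℂ) / (n : ℂ)) := by
        set u : (ZMod n)ˣ := ZMod.unitOfCoprime 4 hc4 with hu
        have hu4 : (u : ZMod n) = 4 := by
          rw [hu, ZMod.coe_unitOfCoprime]; push_cast; ring
        refine Fintype.sum_bijective (fun x : ZMod n => (u : ZMod n) * x) ?_ _ _ ?_
        · refine Function.bijective_iff_has_inverse.mpr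
            ⟨fun x => ((u⁻¹ : (ZMod n)ˣ) : ZMod n) * x, fun x => ?_, fun x => ?_⟩
          · show ((u⁻¹ : (ZMod n)ˣ) : ZMod n) * ((u : ZMod n) * x) = x
            rw [← mul_assoc, ← Units.val_mul, inv_mul_cancel, Units.val_one, one_mul]
          · show ((u : ZMod n) : ZMod n) * (((u⁻¹ : (ZMod n)ˣ) : ZMod n) * x) = x
            rw [← mul_assoc, ← Units.val_mul, mul_inv_cancel, Units.val_one, one_mul]
        · intro x
          have hcast : ((((u : ZMod n) * x).val : ℤ) : ZMod n)
              = ((4 * (x.val : ℤ) : ℤ) : ZMod n) := by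
            push_cast
            rw [ZMod.natCast_val, ZMod.cast_id, ZMod.natCast_val, ZMod.cast_id, hu4]
          have hJ : jacobiSym ((((u : ZMod n) * x).val : ℤ)) n
              = jacobiSym (x.val : ℤ) n := by
            rw [jac_cong n hcast, jacobiSym.mul_left, hJ4, one_mul]
          have hcast2 : (((x.val : ℤ) * (4 * k) : ℤ) : ZMod n)
              = (((((u : ZMod n) * x).val : ℤ) * k : ℤ) : ZMod n) := by
            push_cast
            rw [ZMod.natCast_val, ZMod.cast_id, ZMod.natCast_val, ZMod.cast_id, hu4]
            ring
          rw [hJ, exp_cong n hn hcast2]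
    _ = ∑ a ∈ Finset.range n, (jacobiSym (a : ℤ) n : ℂ) *
        Complex.exp (2 * (π : ℂ) * Complex.I * (a : ℂ) * (k : ℂ) / (n : ℂ)) := by
        rw [← key k]
        exact Finset.sum_congr rfl fun a _ => by rw [e1 k a]
end
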